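/- Fix 0 < p ≤ 1, let n ≥ 1 and let A ⊆ C_n be a nonempty subset. Set ρ = p/2 − Δ(A,p)/n. Suppose that 0 < ρ ≤ 1/4 and that p ≥ (ln 2 + ln(1−2ρ)) / (ln(1−2ρ) − ln(2ρ)). Then (ln|A|)/n ≤ 2ρ·ln(1/(2ρ)) + (1−2ρ)·ln(1/(1−2ρ)). -/

import Mathlib

set_option maxHeartbeats 2000000

/-- The randomized Hamming distance `d_l(x,y) = Σ_{i : x i ≠ y i} l i`, where the coordinates
with `l i = 1` are the ones that are counted. -/
def dl {ι : Type*} [Fintype ι] (l x y : ι → Bool) : ℕ :=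
  (Finset.univ.filter fun i => x i ≠ y i ∧ l i = true).card

/-- The randomized Hamming distance from a point `x` to a subset `A`:
`d_l(x,A) = min_{y ∈ A} d_l(x,y)`. -/
noncomputable def dlToSet {ι : Type*} [Fintype ι] (l x : ι → Bool) (A : Set (ι → Bool)) : ℕ :=
  sInf ((fun y => dl l x y) '' A)

/-- The probability `p^{|l|}(1-p)^{n-|l|}` of the vector `l` of `n` independent
Bernoulli(p) coordinates. -/
noncomputable def bernWeight {ι : Type*} [Fintype ι] (p : ℝ) (l : ι → Bool) : ℝ :=
  p ^ (Finset.univ.filter fun i => l i = true).card *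
    (1 - p) ^ (Finset.univ.filter fun i => l i = false).card

/-- `Δ(A,p)`: the expectation of `d_l(x,A)` when `x` is uniform on the cube and `l` has
independent Bernoulli(p) coordinates. -/
noncomputable def avgDistP {ι : Type*} [Fintype ι] [DecidableEq ι] (p : ℝ)
    (A : Set (ι → Bool)) : ℝ :=
  ∑ l : ι → Bool, ∑ x : ι → Bool,
    (bernWeight p l / 2 ^ Fintype.card ι) * (dlToSet l x A : ℝ)

open Finset Real Filter

section Aux
variable {n : ℕ}

abbrev bcons {n : ℕ} (b : Bool) (f : Fin n → Bool) : Fin (n+1) → Bool := Fin.cons b f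

lemma sum_cube_succ {n : ℕ} (F : (Fin (n+1) → Bool) → ℝ) :
    ∑ g : Fin (n+1) → Bool, F g = ∑ b : Bool, ∑ f : Fin n → Bool, F (bcons b f) := by
  rw [← Equiv.sum_comp (Fin.consEquiv fun _ => Bool) F, Fintype.sum_prod_type]
  rfl

lemma card_filter_cons_true {n : ℕ} (b : Bool) (l : Fin n → Bool) :
    ((univ : Finset (Fin (n+1))).filter fun i => bcons b l i = true).card
      = ((if b = true then 1 else 0) + ((univ : Finset (Fin n)).filter fun i => l i = true).card) := by
  rw [card_filter, card_filter, Fin.sum_univ_succ]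
  simp

lemma card_filter_cons_false {n : ℕ} (b : Bool) (l : Fin n → Bool) :
    ((univ : Finset (Fin (n+1))).filter fun i => bcons b l i = false).card
      = ((if b = false then 1 else 0) + ((univ : Finset (Fin n)).filter fun i => l i = false).card) := by
  rw [card_filter, card_filter, Fin.sum_univ_succ]
  simp

lemma bernWeight_cons {n : ℕ} (p : ℝ) (b : Bool) (l : Fin n → Bool) :
    bernWeight p (bcons b l) = (if b = true then p else 1 - p) * bernWeight p l := by
  unfold bernWeight
  rw [card_filter_cons_true, card_filter_cons_false]
  cases b <;> simp [pow_succ] <;> ring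

lemma dl_cons {n : ℕ} (t ε b : Bool) (l x y : Fin n → Bool) :
    dl (bcons t l) (bcons ε x) (bcons b y)
      = (if (ε ≠ b ∧ t = true) then 1 else 0) + dl l x y := by
  unfold dl
  rw [card_filter, card_filter, Fin.sum_univ_succ]
  simp

/-- section of A -/
def sect (A : Set (Fin (n+1) → Bool)) (b : Bool) : Set (Fin n → Bool) := {f | bcons b f ∈ A}

lemma dlToSet_le {ι : Type*} [Fintype ι] (l x : ι → Bool) (A : Set (ι → Bool)) {y} (hy : y ∈ A) :
    dlToSet l x A ≤ dl l x y := Nat.sInf_le ⟨y, hy, rfl⟩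

lemma dlToSet_attained {ι : Type*} [Fintype ι] (l x : ι → Bool) {A : Set (ι → Bool)}
    (hA : A.Nonempty) : ∃ y ∈ A, dlToSet l x A = dl l x y := by
  obtain ⟨y, hy, h⟩ := Nat.sInf_mem (hA.image fun y => dl l x y)
  exact ⟨y, hy, h.symm⟩

lemma dlToSet_cons_le_sect (t ε b : Bool) (l x : Fin n → Bool) (A : Set (Fin (n+1) → Bool))
    (hb : (sect A b).Nonempty) :
    dlToSet (bcons t l) (bcons ε x) A
      ≤ (if (ε ≠ b ∧ t = true) then 1 else 0) + dlToSet l x (sect A b) := by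
  obtain ⟨y, hy, hEq⟩ := dlToSet_attained l x hb
  have h1 : dlToSet (bcons t l) (bcons ε x) A ≤ dl (bcons t l) (bcons ε x) (bcons b y) :=
    dlToSet_le _ _ _ hy
  rw [dl_cons] at h1
  rw [hEq]
  exact h1

lemma dlToSet_cons_le_union (ε : Bool) (l x : Fin n → Bool) (A : Set (Fin (n+1) → Bool))
    (hU : (sect A false ∪ sect A true).Nonempty) :
    dlToSet (bcons false l) (bcons ε x) A ≤ dlToSet l x (sect A false ∪ sect A true) := by
  obtain ⟨y, hy, hEq⟩ := dlToSet_attained l x hU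
  rcases hy with hy | hy
  · calc dlToSet (bcons false l) (bcons ε x) A ≤ dl (bcons false l) (bcons ε x) (bcons false y) :=
          dlToSet_le _ _ _ hy
      _ = dl l x y := by rw [dl_cons]; simp
      _ = _ := hEq.symm
  · calc dlToSet (bcons false l) (bcons ε x) A ≤ dl (bcons false l) (bcons ε x) (bcons true y) :=
          dlToSet_le _ _ _ hy
      _ = dl l x y := by rw [dl_cons]; simp
      _ = _ := hEq.symm

lemma sect_nonempty (A : Set (Fin (n+1) → Bool)) (hA : A.Nonempty) :
    (sect A false ∪ sect A true).Nonempty := by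
  obtain ⟨f, hf⟩ := hA
  refine ⟨Fin.tail f, ?_⟩
  have : bcons (f 0) (Fin.tail f) ∈ A := by rwa [bcons, Fin.cons_self_tail]
  cases h : f 0
  · left; show bcons false (Fin.tail f) ∈ A; rwa [h] at this
  · right; show bcons true (Fin.tail f) ∈ A; rwa [h] at this

lemma ncard_eq_sects (A : Set (Fin (n+1) → Bool)) :
    A.ncard = (sect A false).ncard + (sect A true).ncard := by
  have hA : A = (bcons false '' sect A false) ∪ (bcons true '' sect A true) := by
    ext f
    constructor
    · intro hf
      have h0 : bcons (f 0) (Fin.tail f) = f := Fin.cons_self_tail f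
      cases h : f 0
      · exact Or.inl ⟨Fin.tail f, show bcons false (Fin.tail f) ∈ A by rw [← h]; rwa [h0], by rw [← h]; exact h0⟩
      · exact Or.inr ⟨Fin.tail f, show bcons true (Fin.tail f) ∈ A by rw [← h]; rwa [h0], by rw [← h]; exact h0⟩
    · rintro (⟨y, hy, rfl⟩ | ⟨y, hy, rfl⟩) <;> exact hy
  have hinj : ∀ b : Bool, Function.Injective (bcons (n := n) b) := by
    intro b y z h
    funext i
    have := congrFun h i.succ
    simpa using this
  nth_rewrite 1 [hA]
  rw [Set.ncard_union_eq, Set.ncard_image_of_injective _ (hinj false),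
    Set.ncard_image_of_injective _ (hinj true)]
  · rw [Set.disjoint_left]
    rintro f ⟨y, _, rfl⟩ ⟨z, _, hz⟩
    have : (bcons true z) 0 = (bcons false y) 0 := by rw [hz]
    simp at this

lemma ncard_union_ge (A : Set (Fin (n+1) → Bool)) (b : Bool) :
    (sect A b).ncard ≤ (sect A false ∪ sect A true).ncard := by
  cases b
  · exact Set.ncard_le_ncard Set.subset_union_left (Set.toFinite _)
  · exact Set.ncard_le_ncard Set.subset_union_right (Set.toFinite _)

end Aux

section Aux2
variable {n : ℕ}

noncomputable def Sfun (p T : ℝ) {n : ℕ} (A : Set (Fin n → Bool)) : ℝ :=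
  ∑ l : Fin n → Bool, ∑ x : Fin n → Bool, (bernWeight p l / 2^n) * T^(dlToSet l x A)

lemma bernWeight_nonneg {ι : Type*} [Fintype ι] {p : ℝ} (hp0 : 0 ≤ p) (hp1 : p ≤ 1)
    (l : ι → Bool) : 0 ≤ bernWeight p l :=
  mul_nonneg (pow_nonneg hp0 _) (pow_nonneg (by linarith) _)

lemma Sfun_nonneg {p T : ℝ} (hp0 : 0 ≤ p) (hp1 : p ≤ 1) (hT : 0 ≤ T) {n : ℕ}
    (A : Set (Fin n → Bool)) : 0 ≤ Sfun p T A := by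
  apply Finset.sum_nonneg; intro l _
  apply Finset.sum_nonneg; intro x _
  have := bernWeight_nonneg hp0 hp1 l
  positivity

/-- the numeric assembly when both sections are nonempty -/
lemma assemble (p T α θ Θ N a0 a1 aU S0 S1 SU : ℝ)
    (hp0 : 0 < p) (hp1 : p ≤ 1) (hT : 1 ≤ T) (hα : 0 < α)
    (H2 : ∀ a b : ℝ, 0 < b → b ≤ a → ((a+b)/(2*a))^α * (1 - p/2 + p/2 * min ((a/b)^α) T) ≤ θ)
    (hΘ : 0 ≤ Θ) (hN : 0 < N) (ha1 : 0 < a1) (ha01 : a1 ≤ a0) (haU : a0 ≤ aU)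
    (hS0 : S0 ≤ Θ * (N/a0)^α) (hS1 : S1 ≤ Θ * (N/a1)^α) (hSU : SU ≤ Θ * (N/aU)^α)
    (hS1n : 0 ≤ S1) (hSUn : 0 ≤ SU) :
    ((a0+a1)/(2*N))^α * ((1-p)*SU + p/2*(min S0 (T*S1) + min S1 (T*S0))) ≤ Θ * θ := by
  have ha0 : 0 < a0 := lt_of_lt_of_le ha1 ha01
  have haU0 : 0 < aU := lt_of_lt_of_le ha0 haU
  have key : (N/a1)^α = (N/a0)^α * (a0/a1)^α := by
    rw [← Real.mul_rpow (by positivity) (by positivity)]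
    congr 1; field_simp
  have hNa0 : (0:ℝ) ≤ (N/a0)^α := by positivity
  have hUle : SU ≤ Θ * (N/a0)^α := by
    refine hSU.trans (mul_le_mul_of_nonneg_left ?_ hΘ)
    exact Real.rpow_le_rpow (by positivity) (by apply div_le_div_of_nonneg_left hN.le ha0 haU) hα.le
  have hm1 : min S0 (T*S1) ≤ Θ * (N/a0)^α := (min_le_left _ _).trans hS0
  have hm2 : min S1 (T*S0) ≤ Θ * ((N/a0)^α * min ((a0/a1)^α) T) := by
    rw [mul_min_of_nonneg _ _ hNa0, mul_min_of_nonneg _ _ hΘ]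
    apply le_min
    · exact (min_le_left _ _).trans (by rw [key] at hS1; exact hS1.trans (le_of_eq (by ring)))
    · refine (min_le_right _ _).trans ?_
      calc T * S0 ≤ T * (Θ * (N/a0)^α) := by
            apply mul_le_mul_of_nonneg_left hS0 (by linarith)
        _ = Θ * ((N/a0)^α * T) := by ring
  have hsum : (1-p)*SU + p/2*(min S0 (T*S1) + min S1 (T*S0))
      ≤ Θ * (N/a0)^α * (1 - p/2 + p/2 * min ((a0/a1)^α) T) := by
    have e1 : (1-p)*SU ≤ (1-p) * (Θ * (N/a0)^α) := mul_le_mul_of_nonneg_left hUle (by linarith)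
    have e2 : p/2*(min S0 (T*S1) + min S1 (T*S0))
        ≤ p/2 * (Θ * (N/a0)^α + Θ * ((N/a0)^α * min ((a0/a1)^α) T)) := by
      apply mul_le_mul_of_nonneg_left (add_le_add hm1 hm2) (by linarith)
    calc (1-p)*SU + p/2*(min S0 (T*S1) + min S1 (T*S0))
        ≤ (1-p) * (Θ * (N/a0)^α) + p/2 * (Θ * (N/a0)^α + Θ * ((N/a0)^α * min ((a0/a1)^α) T)) :=
          add_le_add e1 e2
      _ = Θ * (N/a0)^α * (1 - p/2 + p/2 * min ((a0/a1)^α) T) := by ring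
  have hpre : (0:ℝ) ≤ ((a0+a1)/(2*N))^α := by positivity
  calc ((a0+a1)/(2*N))^α * ((1-p)*SU + p/2*(min S0 (T*S1) + min S1 (T*S0)))
      ≤ ((a0+a1)/(2*N))^α * (Θ * (N/a0)^α * (1 - p/2 + p/2 * min ((a0/a1)^α) T)) := by
        apply mul_le_mul_of_nonneg_left hsum hpre
    _ = Θ * (((a0+a1)/(2*a0))^α * (1 - p/2 + p/2 * min ((a0/a1)^α) T)) := by
        have h : ((a0+a1)/(2*N))^α * (N/a0)^α = ((a0+a1)/(2*a0))^α := by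
          rw [← Real.mul_rpow (by positivity) (by positivity)]
          congr 1
          field_simp
        rw [← h]; ring
    _ ≤ Θ * θ := by
        apply mul_le_mul_of_nonneg_left (H2 a0 a1 ha1 ha01) hΘ


lemma ih_flip {a N S θn α : ℝ} (ha : 0 < a) (hN : 0 < N) (h : (a/N)^α * S ≤ θn) :
    S ≤ θn * (N/a)^α := by
  have h2 : (0:ℝ) < (a/N)^α := Real.rpow_pos_of_pos (by positivity) _
  have h3 : S ≤ θn / (a/N)^α := (le_div_iff₀ h2).2 (by linarith [mul_comm S ((a/N)^α)])
  refine h3.trans (le_of_eq ?_)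
  rw [div_eq_mul_inv, ← Real.inv_rpow (by positivity), inv_div]

lemma step_empty (p T α θ Θ N a0 S0 : ℝ)
    (hp0 : 0 < p) (hp1 : p ≤ 1) (hT : 1 ≤ T) (hα : 0 < α)
    (H1 : 2 - p + p*T ≤ 2 ^ (1+α) * θ)
    (hΘ : 0 ≤ Θ) (hN : 0 < N) (ha0 : 0 < a0)
    (hS0 : S0 ≤ Θ * (N/a0)^α) (hS0n : 0 ≤ S0) :
    (a0/(2*N))^α * ((2-p+p*T)/2 * S0) ≤ Θ * θ := by
  have h2 : ((2:ℝ))^(1+α) = 2 * 2^α := by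
    rw [Real.rpow_add (by norm_num), Real.rpow_one]
  have hsplit : (a0/(2*N))^α = (a0/N)^α * ((1:ℝ)/2)^α := by
    rw [← Real.mul_rpow (by positivity) (by positivity), div_mul_div_comm, mul_one, mul_comm N 2]
  have hkey : (a0/N)^α * S0 ≤ Θ := by
    calc (a0/N)^α * S0 ≤ (a0/N)^α * (Θ * (N/a0)^α) := by
          apply mul_le_mul_of_nonneg_left hS0 (by positivity)
      _ = Θ * ((a0/N) * (N/a0))^α := by
          rw [Real.mul_rpow (by positivity) (by positivity)]; ring
      _ = Θ := by rw [div_mul_div_comm, mul_comm a0 N, div_self (by positivity), Real.one_rpow, mul_one]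
  have hhalf : ((1:ℝ)/2)^α * ((2-p+p*T)/2) ≤ θ := by
    have hpos : (0:ℝ) < 2^α := Real.rpow_pos_of_pos (by norm_num) _
    have h1d : ((1:ℝ)/2)^α = (2^α)⁻¹ := by
      rw [one_div, Real.inv_rpow (by norm_num)]
    rw [h1d]
    rw [inv_mul_le_iff₀ hpos]
    calc (2-p+p*T)/2 ≤ (2^(1+α) * θ)/2 := by
          apply div_le_div_of_nonneg_right H1 (by norm_num)
      _ = 2^α * θ := by rw [h2]; ring
  have hTp : (0:ℝ) ≤ 2-p+p*T := by nlinarith [mul_le_mul_of_nonneg_left hT hp0.le]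
  calc (a0/(2*N))^α * ((2-p+p*T)/2 * S0)
      = ((a0/N)^α * S0) * (((1:ℝ)/2)^α * ((2-p+p*T)/2)) := by rw [hsplit]; ring
    _ ≤ Θ * θ := by
        apply mul_le_mul hkey hhalf ?_ hΘ
        have : (0:ℝ) ≤ ((1:ℝ)/2)^α := by positivity
        nlinarith

lemma master (p T α θ : ℝ) (hp0 : 0 < p) (hp1 : p ≤ 1) (hT : 1 ≤ T) (hα : 0 < α) (hθ : 1 ≤ θ)
    (H1 : 2 - p + p*T ≤ 2 ^ (1+α) * θ)
    (H2 : ∀ a b : ℝ, 0 < b → b ≤ a → ((a+b)/(2*a))^α * (1 - p/2 + p/2 * min ((a/b)^α) T) ≤ θ) :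
    ∀ n (A : Set (Fin n → Bool)), A.Nonempty → ((A.ncard : ℝ)/2^n)^α * Sfun p T A ≤ θ^n := by
  intro n
  induction n with
  | zero =>
    intro A hA
    obtain ⟨f, hf⟩ := hA
    haveI : Subsingleton (Fin 0 → Bool) := ⟨fun a b => funext fun i => i.elim0⟩
    have hAs : A = {f} := Set.eq_singleton_iff_unique_mem.2 ⟨hf, fun g _ => Subsingleton.elim g f⟩
    have hd : ∀ l x : Fin 0 → Bool, dlToSet l x A = 0 := by
      intro l x
      rw [hAs]
      unfold dlToSet dl
      simp
    have hb : ∀ l : Fin 0 → Bool, bernWeight p l = 1 := by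
      intro l; unfold bernWeight; simp
    have hS : Sfun p T A = 1 := by
      unfold Sfun
      simp [hd, hb]
    have hcard : A.ncard = 1 := by rw [hAs]; exact Set.ncard_singleton f
    rw [hS, hcard]
    simp [Real.one_rpow]
  | succ n IH =>
    intro A hA
    have hT0 : (0:ℝ) < T := lt_of_lt_of_le one_pos hT
    set A0 := sect A false with hA0def
    set A1 := sect A true with hA1def
    have hUne : (A0 ∪ A1).Nonempty := sect_nonempty A hA
    set N : ℝ := 2^n with hNdef
    have hN : (0:ℝ) < N := by positivity
    set SU := Sfun p T (A0 ∪ A1) with hSUdef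
    set S0 := Sfun p T A0 with hS0def
    set S1 := Sfun p T A1 with hS1def
    have hSUn : 0 ≤ SU := Sfun_nonneg hp0.le hp1 hT0.le _
    have hS0n : 0 ≤ S0 := Sfun_nonneg hp0.le hp1 hT0.le _
    have hS1n : 0 ≤ S1 := Sfun_nonneg hp0.le hp1 hT0.le _
    set aU : ℝ := ((A0 ∪ A1).ncard : ℝ) with haUdef
    have haU : 0 < aU := by
      have h := (Set.ncard_pos (Set.toFinite _)).2 hUne
      rw [haUdef]
      exact_mod_cast h
    have hSUb : SU ≤ θ^n * (N/aU)^α := by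
      apply ih_flip haU hN (IH _ hUne)
    have hθn : (0:ℝ) ≤ θ^n := by positivity
    have hcardA : (A.ncard : ℝ) = (A0.ncard : ℝ) + (A1.ncard : ℝ) := by
      rw [ncard_eq_sects A]; push_cast; rfl
    have h2pow : ((2:ℝ))^(n+1) = 2*N := by rw [hNdef]; ring
    -- decomposition of Sfun into four blocks
    have hSdec : Sfun p T A = ∑ t : Bool, ∑ l' : Fin n → Bool, ∑ ε : Bool, ∑ x' : Fin n → Bool,
        ((if t = true then p else 1-p) * bernWeight p l' / 2^(n+1)) *
          T^(dlToSet (bcons t l') (bcons ε x') A) := by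
      unfold Sfun
      rw [sum_cube_succ (fun l => ∑ x : Fin (n+1) → Bool, (bernWeight p l / 2^(n+1)) * T^(dlToSet l x A))]
      refine Finset.sum_congr rfl fun t _ => Finset.sum_congr rfl fun l' _ => ?_
      rw [sum_cube_succ (fun x => (bernWeight p (bcons t l') / 2^(n+1)) * T^(dlToSet (bcons t l') x A))]
      refine Finset.sum_congr rfl fun ε _ => Finset.sum_congr rfl fun x' _ => ?_
      rw [bernWeight_cons]
    -- big four-block decomposition
    have hSdec4 : Sfun p T A =
        ((∑ l' : Fin n → Bool, ∑ x' : Fin n → Bool,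
            (p * bernWeight p l' / 2^(n+1)) * T^(dlToSet (bcons true l') (bcons true x') A))
        + (∑ l' : Fin n → Bool, ∑ x' : Fin n → Bool,
            (p * bernWeight p l' / 2^(n+1)) * T^(dlToSet (bcons true l') (bcons false x') A)))
        + ((∑ l' : Fin n → Bool, ∑ x' : Fin n → Bool,
            ((1-p) * bernWeight p l' / 2^(n+1)) * T^(dlToSet (bcons false l') (bcons true x') A))
        + (∑ l' : Fin n → Bool, ∑ x' : Fin n → Bool,
            ((1-p) * bernWeight p l' / 2^(n+1)) * T^(dlToSet (bcons false l') (bcons false x') A))) := by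
      rw [hSdec, Fintype.sum_bool]
      simp only [Fintype.sum_bool, if_true, if_neg (by exact Bool.false_ne_true)]
      rw [Finset.sum_add_distrib, Finset.sum_add_distrib]
    have hWnn : ∀ l' : Fin n → Bool, 0 ≤ bernWeight p l' := bernWeight_nonneg hp0.le hp1
    -- generic block bound
    have hblock : ∀ (co : ℝ), 0 ≤ co → ∀ (t ε : Bool) (B : Set (Fin n → Bool)) (k : ℕ),
        (∀ l' x' : Fin n → Bool, dlToSet (bcons t l') (bcons ε x') A ≤ k + dlToSet l' x' B) →
        (∑ l' : Fin n → Bool, ∑ x' : Fin n → Bool,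
            (co * bernWeight p l' / 2^(n+1)) * T^(dlToSet (bcons t l') (bcons ε x') A))
          ≤ co/2 * T^k * Sfun p T B := by
      intro co hco t ε B k hd
      have hterm : ∀ l' x' : Fin n → Bool,
          (co * bernWeight p l' / 2^(n+1)) * T^(dlToSet (bcons t l') (bcons ε x') A)
            ≤ co/2 * T^k * ((bernWeight p l' / 2^n) * T^(dlToSet l' x' B)) := by
        intro l' x'
        have h1 : T^(dlToSet (bcons t l') (bcons ε x') A) ≤ T^(k + dlToSet l' x' B) :=
          pow_le_pow_right₀ hT (hd l' x')
        have hw := hWnn l'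
        have h2 : (0:ℝ) ≤ co * bernWeight p l' / 2^(n+1) := by positivity
        calc (co * bernWeight p l' / 2^(n+1)) * T^(dlToSet (bcons t l') (bcons ε x') A)
            ≤ (co * bernWeight p l' / 2^(n+1)) * T^(k + dlToSet l' x' B) :=
              mul_le_mul_of_nonneg_left h1 h2
          _ = co/2 * T^k * ((bernWeight p l' / 2^n) * T^(dlToSet l' x' B)) := by
              rw [pow_add, pow_succ]; ring
      calc (∑ l' : Fin n → Bool, ∑ x' : Fin n → Bool,
            (co * bernWeight p l' / 2^(n+1)) * T^(dlToSet (bcons t l') (bcons ε x') A))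
          ≤ ∑ l' : Fin n → Bool, ∑ x' : Fin n → Bool,
            co/2 * T^k * ((bernWeight p l' / 2^n) * T^(dlToSet l' x' B)) :=
            Finset.sum_le_sum (fun l' _ => Finset.sum_le_sum (fun x' _ => hterm l' x'))
        _ = co/2 * T^k * Sfun p T B := by
            unfold Sfun
            rw [Finset.mul_sum]
            exact Finset.sum_congr rfl fun l' _ => by rw [Finset.mul_sum]
    have hp1' : (0:ℝ) ≤ 1 - p := by linarith
    -- case analysis on sections
    rcases A0.eq_empty_or_nonempty with h0 | h0 <;> rcases A1.eq_empty_or_nonempty with h1 | h1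
    · exfalso
      rw [h0, h1] at hUne
      simp at hUne
    · -- A0 empty, A1 nonempty
      have hbd : ∀ (t ε : Bool) l' x', dlToSet (bcons t l') (bcons ε x') A
          ≤ (if (ε ≠ true ∧ t = true) then 1 else 0) + dlToSet l' x' A1 :=
        fun t ε l' x' => dlToSet_cons_le_sect t ε true l' x' A h1
      have hS1b : S1 ≤ θ^n * (N/((A1.ncard : ℝ)))^α := by
        apply ih_flip ?_ hN (IH _ h1)
        exact_mod_cast (Set.ncard_pos (Set.toFinite _)).2 h1
      have hstot : Sfun p T A ≤ (2-p+p*T)/2 * S1 := by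
        rw [hSdec4]
        have b1 := hblock p hp0.le true true A1 0 (fun l' x' => by simpa using hbd true true l' x')
        have b2 := hblock p hp0.le true false A1 1 (fun l' x' => by simpa using hbd true false l' x')
        have b3 := hblock (1-p) hp1' false true A1 0 (fun l' x' => by simpa using hbd false true l' x')
        have b4 := hblock (1-p) hp1' false false A1 0 (fun l' x' => by simpa using hbd false false l' x')
        rw [pow_zero] at b1 b3 b4
        rw [pow_one] at b2
        have hS1nn : 0 ≤ S1 := hS1n
        nlinarith [hS1nn, hT0.le]
      have hcard1 : (A.ncard : ℝ) = (A1.ncard : ℝ) := by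
        rw [hcardA, h0]
        simp
      have hprefix : (0:ℝ) ≤ ((A.ncard : ℝ)/2^(n+1))^α := by positivity
      have ha1c : (0:ℝ) < (A1.ncard : ℝ) := by
        exact_mod_cast (Set.ncard_pos (Set.toFinite _)).2 h1
      calc ((A.ncard : ℝ)/2^(n+1))^α * Sfun p T A
          ≤ ((A.ncard : ℝ)/2^(n+1))^α * ((2-p+p*T)/2 * S1) :=
            mul_le_mul_of_nonneg_left hstot hprefix
        _ = (((A1.ncard : ℝ))/(2*N))^α * ((2-p+p*T)/2 * S1) := by rw [hcard1, h2pow]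
        _ ≤ θ^n * θ := step_empty p T α θ (θ^n) N _ S1 hp0 hp1 hT hα H1 hθn hN ha1c hS1b hS1n
        _ = θ^(n+1) := (pow_succ θ n).symm
    · -- A1 empty, A0 nonempty
      have hbd : ∀ (t ε : Bool) l' x', dlToSet (bcons t l') (bcons ε x') A
          ≤ (if (ε ≠ false ∧ t = true) then 1 else 0) + dlToSet l' x' A0 :=
        fun t ε l' x' => dlToSet_cons_le_sect t ε false l' x' A h0
      have hS0b : S0 ≤ θ^n * (N/((A0.ncard : ℝ)))^α := by
        apply ih_flip ?_ hN (IH _ h0)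
        exact_mod_cast (Set.ncard_pos (Set.toFinite _)).2 h0
      have hstot : Sfun p T A ≤ (2-p+p*T)/2 * S0 := by
        rw [hSdec4]
        have b1 := hblock p hp0.le true true A0 1 (fun l' x' => by simpa using hbd true true l' x')
        have b2 := hblock p hp0.le true false A0 0 (fun l' x' => by simpa using hbd true false l' x')
        have b3 := hblock (1-p) hp1' false true A0 0 (fun l' x' => by simpa using hbd false true l' x')
        have b4 := hblock (1-p) hp1' false false A0 0 (fun l' x' => by simpa using hbd false false l' x')
        rw [pow_zero] at b2 b3 b4
        rw [pow_one] at b1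
        nlinarith [hS0n, hT0.le]
      have hcard1 : (A.ncard : ℝ) = (A0.ncard : ℝ) := by
        rw [hcardA, h1]
        simp
      have hprefix : (0:ℝ) ≤ ((A.ncard : ℝ)/2^(n+1))^α := by positivity
      have ha0c : (0:ℝ) < (A0.ncard : ℝ) := by
        exact_mod_cast (Set.ncard_pos (Set.toFinite _)).2 h0
      calc ((A.ncard : ℝ)/2^(n+1))^α * Sfun p T A
          ≤ ((A.ncard : ℝ)/2^(n+1))^α * ((2-p+p*T)/2 * S0) :=
            mul_le_mul_of_nonneg_left hstot hprefix
        _ = (((A0.ncard : ℝ))/(2*N))^α * ((2-p+p*T)/2 * S0) := by rw [hcard1, h2pow]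
        _ ≤ θ^n * θ := step_empty p T α θ (θ^n) N _ S0 hp0 hp1 hT hα H1 hθn hN ha0c hS0b hS0n
        _ = θ^(n+1) := (pow_succ θ n).symm
    · -- both nonempty
      have ha0c : (0:ℝ) < (A0.ncard : ℝ) := by
        exact_mod_cast (Set.ncard_pos (Set.toFinite _)).2 h0
      have ha1c : (0:ℝ) < (A1.ncard : ℝ) := by
        exact_mod_cast (Set.ncard_pos (Set.toFinite _)).2 h1
      have hS0b : S0 ≤ θ^n * (N/((A0.ncard : ℝ)))^α := ih_flip ha0c hN (IH _ h0)
      have hS1b : S1 ≤ θ^n * (N/((A1.ncard : ℝ)))^α := ih_flip ha1c hN (IH _ h1)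
      have haU0 : ((A0.ncard : ℝ)) ≤ aU := by
        rw [haUdef]; exact_mod_cast ncard_union_ge A false
      have haU1 : ((A1.ncard : ℝ)) ≤ aU := by
        rw [haUdef]; exact_mod_cast ncard_union_ge A true
      have hstot : Sfun p T A ≤ (1-p)*SU + p/2*(min S0 (T*S1) + min S1 (T*S0)) := by
        rw [hSdec4]
        have hbd0 : ∀ (t ε : Bool) l' x', dlToSet (bcons t l') (bcons ε x') A
            ≤ (if (ε ≠ false ∧ t = true) then 1 else 0) + dlToSet l' x' A0 :=
          fun t ε l' x' => dlToSet_cons_le_sect t ε false l' x' A h0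
        have hbd1 : ∀ (t ε : Bool) l' x', dlToSet (bcons t l') (bcons ε x') A
            ≤ (if (ε ≠ true ∧ t = true) then 1 else 0) + dlToSet l' x' A1 :=
          fun t ε l' x' => dlToSet_cons_le_sect t ε true l' x' A h1
        -- (true,true) block ≤ p/2 * min S1 (T*S0)
        have btt : (∑ l' : Fin n → Bool, ∑ x' : Fin n → Bool,
            (p * bernWeight p l' / 2^(n+1)) * T^(dlToSet (bcons true l') (bcons true x') A))
            ≤ p/2 * min S1 (T*S0) := by
          rw [mul_min_of_nonneg _ _ (by positivity : (0:ℝ) ≤ p/2)]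
          apply le_min
          · have := hblock p hp0.le true true A1 0 (fun l' x' => by simpa using hbd1 true true l' x')
            rw [pow_zero] at this
            linarith
          · have := hblock p hp0.le true true A0 1 (fun l' x' => by simpa using hbd0 true true l' x')
            rw [pow_one] at this
            calc _ ≤ p/2*T*S0 := this
              _ = p/2*(T*S0) := by ring
        have btf : (∑ l' : Fin n → Bool, ∑ x' : Fin n → Bool,
            (p * bernWeight p l' / 2^(n+1)) * T^(dlToSet (bcons true l') (bcons false x') A))
            ≤ p/2 * min S0 (T*S1) := by
          rw [mul_min_of_nonneg _ _ (by positivity : (0:ℝ) ≤ p/2)]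
          apply le_min
          · have := hblock p hp0.le true false A0 0 (fun l' x' => by simpa using hbd0 true false l' x')
            rw [pow_zero] at this
            linarith
          · have := hblock p hp0.le true false A1 1 (fun l' x' => by simpa using hbd1 true false l' x')
            rw [pow_one] at this
            calc _ ≤ p/2*T*S1 := this
              _ = p/2*(T*S1) := by ring
        have hbdU : ∀ (ε : Bool) l' x', dlToSet (bcons false l') (bcons ε x') A
            ≤ 0 + dlToSet l' x' (A0 ∪ A1) :=
          fun ε l' x' => by simpa using dlToSet_cons_le_union ε l' x' A hUne
        have bft := hblock (1-p) hp1' false true (A0 ∪ A1) 0 (hbdU true)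
        have bff := hblock (1-p) hp1' false false (A0 ∪ A1) 0 (hbdU false)
        rw [pow_zero] at bft bff
        have : (1-p)/2*1*SU + (1-p)/2*1*SU = (1-p)*SU := by ring
        linarith
      have hprefix : (0:ℝ) ≤ ((A.ncard : ℝ)/2^(n+1))^α := by positivity
      have hmain : ((A.ncard : ℝ)/(2*N))^α * ((1-p)*SU + p/2*(min S0 (T*S1) + min S1 (T*S0)))
          ≤ θ^n * θ := by
        rcases le_total ((A1.ncard : ℝ)) ((A0.ncard : ℝ)) with hle | hle
        · have := assemble p T α θ (θ^n) N ((A0.ncard : ℝ)) ((A1.ncard : ℝ)) aU S0 S1 SU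
            hp0 hp1 hT hα H2 hθn hN ha1c hle haU0 hS0b hS1b hSUb hS1n hSUn
          rw [hcardA]
          exact this
        · have := assemble p T α θ (θ^n) N ((A1.ncard : ℝ)) ((A0.ncard : ℝ)) aU S1 S0 SU
            hp0 hp1 hT hα H2 hθn hN ha0c hle haU1 hS1b hS0b hSUb hS0n hSUn
          rw [hcardA]
          have e1 : (A0.ncard : ℝ) + (A1.ncard : ℝ) = (A1.ncard : ℝ) + (A0.ncard : ℝ) := add_comm _ _
          have e2 : min S1 (T*S0) + min S0 (T*S1) = min S0 (T*S1) + min S1 (T*S0) := add_comm _ _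
          rw [e1, ← e2]
          exact this
      calc ((A.ncard : ℝ)/2^(n+1))^α * Sfun p T A
          ≤ ((A.ncard : ℝ)/2^(n+1))^α * ((1-p)*SU + p/2*(min S0 (T*S1) + min S1 (T*S0))) :=
            mul_le_mul_of_nonneg_left hstot hprefix
        _ = ((A.ncard : ℝ)/(2*N))^α * ((1-p)*SU + p/2*(min S0 (T*S1) + min S1 (T*S0))) := by
            rw [h2pow]
        _ ≤ θ^n * θ := hmain
        _ = θ^(n+1) := (pow_succ θ n).symm

lemma sum_bernWeight (p : ℝ) : ∀ n : ℕ, ∑ l : Fin n → Bool, bernWeight p l = 1 := by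
  intro n
  induction n with
  | zero =>
    haveI : Subsingleton (Fin 0 → Bool) := ⟨fun a b => funext fun i => i.elim0⟩
    have h : ∀ l : Fin 0 → Bool, bernWeight p l = 1 := by
      intro l; unfold bernWeight; simp
    simp [h]
  | succ n IH =>
    rw [sum_cube_succ (fun l => bernWeight p l), Fintype.sum_bool]
    simp only [bernWeight_cons]
    rw [← Finset.mul_sum, ← Finset.mul_sum, IH]
    norm_num

lemma card_cube (n : ℕ) : Fintype.card (Fin n → Bool) = 2^n := by
  rw [Fintype.card_fun]
  simp

/-- Jensen step -/
lemma jensen_step (p T : ℝ) (hp0 : 0 ≤ p) (hp1 : p ≤ 1) (hT : 0 < T) {n : ℕ}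
    (A : Set (Fin n → Bool)) :
    Real.exp (Real.log T * (∑ l : Fin n → Bool, ∑ x : Fin n → Bool,
        (bernWeight p l / 2^n) * (dlToSet l x A : ℝ))) ≤ Sfun p T A := by
  classical
  set w : (Fin n → Bool) × (Fin n → Bool) → ℝ := fun q => bernWeight p q.1 / 2^n with hw
  have hw0 : ∀ q ∈ (univ : Finset ((Fin n → Bool) × (Fin n → Bool))), 0 ≤ w q :=
    fun q _ => by
      have := bernWeight_nonneg hp0 hp1 q.1
      positivity
  have hw1 : ∑ q : (Fin n → Bool) × (Fin n → Bool), w q = 1 := by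
    rw [Fintype.sum_prod_type]
    have : ∀ l : Fin n → Bool, ∑ _x : Fin n → Bool, bernWeight p l / 2^n = bernWeight p l := by
      intro l
      rw [Finset.sum_const, card_univ, card_cube, nsmul_eq_mul]
      push_cast
      field_simp
    simp only [hw]
    rw [Finset.sum_congr rfl (fun l _ => this l), sum_bernWeight]
  have hjen := convexOn_exp.map_sum_le (t := (univ : Finset ((Fin n → Bool) × (Fin n → Bool))))
    (p := fun q => Real.log T * (dlToSet q.1 q.2 A : ℝ)) hw0 hw1 (fun _ _ => Set.mem_univ _)
  have hleft : ∑ q : (Fin n → Bool) × (Fin n → Bool), w q • (Real.log T * (dlToSet q.1 q.2 A : ℝ))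
      = Real.log T * (∑ l : Fin n → Bool, ∑ x : Fin n → Bool,
        (bernWeight p l / 2^n) * (dlToSet l x A : ℝ)) := by
    rw [Finset.mul_sum, Fintype.sum_prod_type]
    refine Finset.sum_congr rfl fun l _ => ?_
    rw [Finset.mul_sum]
    refine Finset.sum_congr rfl fun x _ => ?_
    simp only [smul_eq_mul, hw]
    ring
  have hright : ∑ q : (Fin n → Bool) × (Fin n → Bool), w q • Real.exp (Real.log T * (dlToSet q.1 q.2 A : ℝ))
      = Sfun p T A := by
    unfold Sfun
    rw [Fintype.sum_prod_type]
    refine Finset.sum_congr rfl fun l _ => Finset.sum_congr rfl fun x _ => ?_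
    simp only [smul_eq_mul, hw]
    congr 1
    rw [mul_comm (Real.log T), Real.exp_nat_mul, Real.exp_log hT]
  rw [hleft] at hjen
  rw [hright] at hjen
  exact hjen

noncomputable def Ffun (p α r : ℝ) : ℝ := (2-p)*(1+r)^α + p*(1+1/r)^α

lemma Ffun_deriv (p α : ℝ) {r : ℝ} (hr : 0 < r) :
    HasDerivAt (Ffun p α) ((2-p)*(α*(1+r)^(α-1)) - p*(α*(1+1/r)^(α-1)*(1/r^2))) r := by
  have h1 : HasDerivAt (fun r : ℝ => 1+r) 1 r := (hasDerivAt_id r).const_add 1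
  have h1p : HasDerivAt (fun r : ℝ => (1+r)^α) (α*(1+r)^(α-1)) r := by
    have := (h1.rpow_const (p := α) (Or.inl (by positivity : (0:ℝ) < 1+r).ne'))
    simpa using this
  have h2 : HasDerivAt (fun r : ℝ => 1+1/r) (-(1/r^2)) r := by
    have := ((hasDerivAt_inv (ne_of_gt hr)).const_add 1)
    simpa [one_div] using this
  have hpos : (0:ℝ) < 1+1/r := by positivity
  have h2p := h2.rpow_const (p := α) (Or.inl hpos.ne')
  have hsum := ((h1p.const_mul (2-p)).add (h2p.const_mul p))
  convert hsum using 1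
  · rfl
  · rfl
  · rfl
  · ring

lemma Ffun_deriv_sign (p α : ℝ) (hp0 : 0 < p) (hp2 : p < 2) (hα : 0 < α)
    {y : ℝ} (hy : 0 < y) :
    ((2-p)*(α*(1+y)^(α-1)) - p*(α*(1+1/y)^(α-1)*(1/y^2)))
      = α*(1+y)^(α-1) * ((2-p) - p/y^(1+α)) := by
  have h1y : (0:ℝ) < 1+y := by positivity
  have e0 : (1:ℝ)+1/y = (1+y)/y := by field_simp; ring
  have e1 : ((1:ℝ)+1/y)^(α-1) = (1+y)^(α-1) * (y^(α-1))⁻¹ := by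
    rw [e0, Real.div_rpow h1y.le hy.le, div_eq_mul_inv]
  have e2 : (y^(α-1))⁻¹ * (1/y^2) = (y^(1+α))⁻¹ := by
    rw [one_div, ← Real.rpow_natCast y 2, ← mul_inv, ← Real.rpow_add hy]
    have h3 : α - 1 + (2:ℕ) = 1 + α := by push_cast; ring
    rw [h3]
  rw [e1, div_eq_mul_inv p, ← e2]
  ring

lemma Ffun_unimodal (p α : ℝ) (hp0 : 0 < p) (hp2 : p < 2) (hα : 0 < α) {x r : ℝ}
    (hx : 0 < x) (hxr : x ≤ r) (hr1 : r ≤ 1) :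
    Ffun p α r ≤ max (Ffun p α x) (Ffun p α 1) := by
  have hr0 : 0 < r := lt_of_lt_of_le hx hxr
  set rc : ℝ := (p/(2-p))^(1/(1+α)) with hrc
  have hpq : (0:ℝ) < p/(2-p) := div_pos hp0 (by linarith)
  have hrc0 : 0 < rc := Real.rpow_pos_of_pos hpq _
  have hcrit : rc^(1+α) = p/(2-p) := by
    rw [hrc, ← Real.rpow_mul hpq.le, one_div, inv_mul_cancel₀ (by positivity : (1:ℝ)+α ≠ 0),
      Real.rpow_one]
  rcases le_total rc r with hcase | hcase
  · -- monotone on [r,1]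
    have hmono : MonotoneOn (Ffun p α) (Set.Icc r 1) := by
      apply monotoneOn_of_deriv_nonneg (convex_Icc r 1)
      · exact fun y hy => ((Ffun_deriv p α (lt_of_lt_of_le hr0 hy.1)).continuousAt).continuousWithinAt
      · intro y hy
        rw [interior_Icc] at hy
        exact ((Ffun_deriv p α (lt_of_lt_of_le hr0 hy.1.le)).differentiableAt).differentiableWithinAt
      · intro y hy
        rw [interior_Icc] at hy
        have hy0 : 0 < y := lt_of_lt_of_le hr0 hy.1.le
        rw [(Ffun_deriv p α hy0).deriv, Ffun_deriv_sign p α hp0 hp2 hα hy0]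
        have hyc : rc ≤ y := le_trans hcase hy.1.le
        have hpow : p/(2-p) ≤ y^(1+α) := by
          rw [← hcrit]
          exact Real.rpow_le_rpow hrc0.le hyc (by positivity)
        have hypos : (0:ℝ) < y^(1+α) := Real.rpow_pos_of_pos hy0 _
        have : p/y^(1+α) ≤ (2-p) := by
          rw [div_le_iff₀ hypos]
          calc p = (2-p) * (p/(2-p)) := by
                rw [mul_div_assoc']
                rw [mul_comm]
                rw [mul_div_assoc]
                rw [div_self (by linarith : (2:ℝ)-p ≠ 0), mul_one]
            _ ≤ (2-p) * y^(1+α) := by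
                apply mul_le_mul_of_nonneg_left hpow (by linarith)
        have h1y : (0:ℝ) ≤ α*(1+y)^(α-1) := by positivity
        have h2 : 0 ≤ (2-p) - p/y^(1+α) := by linarith
        positivity
    have := hmono (Set.mem_Icc.2 ⟨le_refl r, hr1⟩) (Set.mem_Icc.2 ⟨hr1, le_refl 1⟩) hr1
    exact le_trans this (le_max_right _ _)
  · -- antitone on [x,r]
    have hanti : AntitoneOn (Ffun p α) (Set.Icc x r) := by
      apply antitoneOn_of_deriv_nonpos (convex_Icc x r)
      · exact fun y hy => ((Ffun_deriv p α (lt_of_lt_of_le hx hy.1)).continuousAt).continuousWithinAt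
      · intro y hy
        rw [interior_Icc] at hy
        exact ((Ffun_deriv p α (lt_of_lt_of_le hx hy.1.le)).differentiableAt).differentiableWithinAt
      · intro y hy
        rw [interior_Icc] at hy
        have hy0 : 0 < y := lt_of_lt_of_le hx hy.1.le
        rw [(Ffun_deriv p α hy0).deriv, Ffun_deriv_sign p α hp0 hp2 hα hy0]
        have hyc : y ≤ rc := le_trans hy.2.le hcase
        have hpow : y^(1+α) ≤ p/(2-p) := by
          rw [← hcrit]
          exact Real.rpow_le_rpow hy0.le hyc (by positivity)
        have hypos : (0:ℝ) < y^(1+α) := Real.rpow_pos_of_pos hy0 _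
        have : (2-p) ≤ p/y^(1+α) := by
          rw [le_div_iff₀ hypos]
          calc (2-p) * y^(1+α) ≤ (2-p) * (p/(2-p)) := by
                apply mul_le_mul_of_nonneg_left hpow (by linarith)
            _ = p := by
                rw [mul_div_assoc']
                rw [mul_comm]
                rw [mul_div_assoc]
                rw [div_self (by linarith : (2:ℝ)-p ≠ 0), mul_one]
        have h1y : (0:ℝ) ≤ α*(1+y)^(α-1) := by positivity
        have h2 : (2-p) - p/y^(1+α) ≤ 0 := by linarith
        exact mul_nonpos_of_nonneg_of_nonpos h1y h2
    have := hanti (Set.mem_Icc.2 ⟨le_refl x, hxr⟩) (Set.mem_Icc.2 ⟨hxr, le_refl r⟩) hxr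
    exact le_trans this (le_max_left _ _)

noncomputable def thetaF (p c α : ℝ) : ℝ :=
  max 1 ((((1+Real.exp (-c))/2)^α) * ((2-p+p*Real.exp (c*α))/2))

lemma exp_neg_rpow (c α : ℝ) : (Real.exp (-c))^(α:ℝ) = Real.exp (-(c*α)) := by
  rw [Real.rpow_def_of_pos (Real.exp_pos _), Real.log_exp]
  congr 1; ring

lemma coeff_pos {p T : ℝ} (hp0 : 0 < p) (hp1 : p ≤ 1) (hT : 1 ≤ T) : (0:ℝ) < 2-p+p*T := by
  nlinarith

lemma H1_holds (p c α : ℝ) (hp0 : 0 < p) (hp1 : p ≤ 1) (hα : 0 < α) (hc : 0 ≤ c) :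
    2 - p + p*Real.exp (c*α) ≤ (2:ℝ)^((1:ℝ)+α) * thetaF p c α := by
  set x := Real.exp (-c) with hxdef
  set T := Real.exp (c*α) with hTdef
  have hx0 : 0 < x := Real.exp_pos _
  have hT1 : 1 ≤ T := Real.one_le_exp (by positivity)
  have hco := coeff_pos hp0 hp1 hT1
  have hθ : ((1+x)/2)^α * ((2-p+p*T)/2) ≤ thetaF p c α := le_max_right _ _
  have h2a : (2:ℝ)^((1:ℝ)+α) = 2 * 2^α := by
    rw [Real.rpow_add (by norm_num), Real.rpow_one]
  have hkey : (2:ℝ)^((1:ℝ)+α) * (((1+x)/2)^α * ((2-p+p*T)/2)) = (1+x)^α * (2-p+p*T) := by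
    rw [h2a, Real.div_rpow (by positivity) (by norm_num)]
    have h2pos : (0:ℝ) < (2:ℝ)^α := Real.rpow_pos_of_pos (by norm_num) _
    field_simp
  have hone : (1:ℝ) ≤ (1+x)^α := by
    calc (1:ℝ) = 1^α := (Real.one_rpow α).symm
      _ ≤ (1+x)^α := Real.rpow_le_rpow (by norm_num) (by linarith) hα.le
  calc 2 - p + p*T ≤ (1+x)^α * (2-p+p*T) := by nlinarith
    _ = (2:ℝ)^((1:ℝ)+α) * (((1+x)/2)^α * ((2-p+p*T)/2)) := hkey.symm
    _ ≤ (2:ℝ)^((1:ℝ)+α) * thetaF p c α := by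
        apply mul_le_mul_of_nonneg_left hθ (by positivity)

lemma H2_holds (p c α : ℝ) (hp0 : 0 < p) (hp1 : p ≤ 1) (hα : 0 < α) (hc : 0 ≤ c) :
    ∀ a b : ℝ, 0 < b → b ≤ a →
    ((a+b)/(2*a))^α * (1 - p/2 + p/2 * min ((a/b)^α) (Real.exp (c*α))) ≤ thetaF p c α := by
  intro a b hb hba
  have ha : 0 < a := lt_of_lt_of_le hb hba
  set x := Real.exp (-c) with hxdef
  set T := Real.exp (c*α) with hTdef
  have hx0 : 0 < x := Real.exp_pos _
  have hx1 : x ≤ 1 := Real.exp_le_one_iff.2 (by linarith)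
  have hT1 : 1 ≤ T := Real.one_le_exp (by positivity)
  have hco := coeff_pos hp0 hp1 hT1
  set r := b/a with hrdef
  have hr0 : 0 < r := by positivity
  have hr1 : r ≤ 1 := (div_le_one ha).2 hba
  have hfrac : (a+b)/(2*a) = (1+r)/2 := by
    rw [hrdef, one_add_div (ne_of_gt ha), div_div, mul_comm a 2]
  have hab' : a/b = r⁻¹ := by rw [hrdef, inv_div]
  have hxT : (x^α)⁻¹ = T := by
    rw [hxdef, exp_neg_rpow, ← Real.exp_neg]
    rw [hTdef]
    congr 1; ring
  rcases le_total T ((a/b)^α) with hmin | hmin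
  · rw [min_eq_right hmin]
    have hrx : r ≤ x := by
      by_contra hlt
      push_neg at hlt
      have h1 : (a/b)^α < (x⁻¹)^α := by
        rw [hab']
        exact Real.rpow_lt_rpow (by positivity) ((inv_lt_inv₀ (hx0.trans hlt) hx0).2 hlt) hα
      rw [Real.inv_rpow hx0.le, hxT] at h1
      linarith
    have hmono : ((1+r)/2)^α ≤ ((1+x)/2)^α :=
      Real.rpow_le_rpow (by positivity) (by linarith) hα.le
    calc ((a+b)/(2*a))^α * (1 - p/2 + p/2 * T) = ((1+r)/2)^α * ((2-p+p*T)/2) := by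
          rw [hfrac]; ring_nf
      _ ≤ ((1+x)/2)^α * ((2-p+p*T)/2) := by
          apply mul_le_mul_of_nonneg_right hmono (by linarith)
      _ ≤ thetaF p c α := le_max_right _ _
  · rw [min_eq_left hmin]
    have hxr : x ≤ r := by
      by_contra hlt
      push_neg at hlt
      have h1 : (x⁻¹)^α < (a/b)^α := by
        rw [hab']
        exact Real.rpow_lt_rpow (by positivity) ((inv_lt_inv₀ (hr0.trans hlt) hr0).2 hlt) hα
      rw [Real.inv_rpow hx0.le, hxT] at h1
      linarith
    have h2pos : (0:ℝ) < (2:ℝ)^α := Real.rpow_pos_of_pos (by norm_num) _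
    have key : ((1+r)/2)^α * (1 - p/2 + p/2 * (a/b)^α) = Ffun p α r / (2*2^α) := by
      rw [Ffun, hab', Real.div_rpow (by positivity : (0:ℝ) ≤ 1+r) (by norm_num : (0:ℝ) ≤ 2)]
      have h5 : (1+1/r)^α = (1+r)^α * (r⁻¹)^α := by
        rw [← Real.mul_rpow (by positivity) (by positivity)]
        congr 1
        field_simp
        ring
      rw [h5]
      field_simp
    have hF1 : Ffun p α 1 = 2 * 2^α := by
      rw [Ffun]
      norm_num
      ring
    have hFx : Ffun p α x / (2*2^α) = ((1+x)/2)^α * ((2-p+p*T)/2) := by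
      rw [Ffun]
      have h5 : (1+1/x)^α = (1+x)^α * (x⁻¹)^α := by
        rw [← Real.mul_rpow (by positivity) (by positivity)]
        congr 1
        field_simp
        ring
      rw [h5, Real.inv_rpow hx0.le, hxT,
        Real.div_rpow (by positivity : (0:ℝ) ≤ 1+x) (by norm_num : (0:ℝ) ≤ 2)]
      field_simp
    have huni := Ffun_unimodal p α hp0 (by linarith) hα hx0 hxr hr1
    calc ((a+b)/(2*a))^α * (1 - p/2 + p/2 * (a/b)^α)
        = Ffun p α r / (2*2^α) := by rw [hfrac]; exact key
      _ ≤ max (Ffun p α x) (Ffun p α 1) / (2*2^α) := by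
          apply div_le_div_of_nonneg_right huni (by positivity)
      _ = max (Ffun p α x / (2*2^α)) (Ffun p α 1 / (2*2^α)) := by
          rw [max_div_div_right (by positivity : (0:ℝ) ≤ 2*2^α)]
      _ = max (((1+x)/2)^α * ((2-p+p*T)/2)) 1 := by
          rw [hFx, hF1, div_self (by positivity : (2*(2:ℝ)^α) ≠ 0)]
      _ = thetaF p c α := by rw [max_comm]; rfl

lemma theta_limit (p c : ℝ) (hp0 : 0 < p) (hp1 : p ≤ 1) (hc : 0 ≤ c) :
    Filter.Tendsto (fun α => Real.log (thetaF p c α)/α) (nhdsWithin 0 (Set.Ioi 0))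
      (nhds (max 0 (Real.log ((1+Real.exp (-c))/2) + c*p/2))) := by
  set x := Real.exp (-c) with hxdef
  have hx0 : 0 < x := Real.exp_pos _
  set g : ℝ → ℝ := fun α => Real.log ((2-p+p*Real.exp (c*α))/2) with hgdef
  have hg0 : g 0 = 0 := by
    rw [hgdef]
    norm_num
  have hgd : HasDerivAt g (c*p/2) 0 := by
    have h1 : HasDerivAt (fun α : ℝ => c*α) c 0 := by
      simpa using (hasDerivAt_id (0:ℝ)).const_mul c
    have h2 : HasDerivAt (fun α : ℝ => Real.exp (c*α)) (Real.exp (c*0) * c) 0 := h1.exp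
    have h3 : HasDerivAt (fun α : ℝ => (2-p+p*Real.exp (c*α))/2)
        ((p * (Real.exp (c*0) * c))/2) 0 := ((h2.const_mul p).const_add (2-p)).div_const 2
    have h4 := h3.log (by norm_num)
    have he : Real.exp (c*0) = 1 := by norm_num
    rw [he] at h4
    norm_num at h4
    convert h4 using 1
    rw [mul_comm]
  have hslope : Tendsto (fun α => g α / α) (nhdsWithin 0 (Set.Ioi 0)) (nhds (c*p/2)) := by
    have h1 := hasDerivAt_iff_tendsto_slope.1 hgd
    have h2 : Tendsto (slope g 0) (nhdsWithin 0 (Set.Ioi 0)) (nhds (c*p/2)) := by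
      apply tendsto_nhdsWithin_mono_left ?_ h1
      intro y hy
      exact Set.mem_compl_singleton_iff.2 (ne_of_gt hy)
    apply h2.congr
    intro α
    rw [slope_def_field, hg0, sub_zero, sub_zero]
  have hmain : Tendsto (fun α => max 0 (Real.log ((1+x)/2) + g α / α)) (nhdsWithin 0 (Set.Ioi 0))
      (nhds (max 0 (Real.log ((1+x)/2) + c*p/2))) :=
    tendsto_const_nhds.max (tendsto_const_nhds.add hslope)
  refine Filter.Tendsto.congr' ?_ hmain
  have hev : ∀ᶠ α in (nhdsWithin (0:ℝ) (Set.Ioi 0)), α ∈ Set.Ioi (0:ℝ) :=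
    eventually_mem_nhdsWithin
  refine hev.mono fun α hα => ?_
  have hα : (0:ℝ) < α := hα
  have hTa : 1 ≤ Real.exp (c*α) := Real.one_le_exp (by positivity)
  have hcoef : (0:ℝ) < (2-p+p*Real.exp (c*α))/2 := by
    have := coeff_pos hp0 hp1 hTa
    linarith
  have hbx : (0:ℝ) < (1+x)/2 := by positivity
  have hψ : (0:ℝ) < (((1+x)/2)^α) * ((2-p+p*Real.exp (c*α))/2) := by
    apply mul_pos (Real.rpow_pos_of_pos hbx _) hcoef
  have hlogψ : Real.log ((((1+x)/2)^α) * ((2-p+p*Real.exp (c*α))/2))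
      = α * Real.log ((1+x)/2) + g α := by
    rw [Real.log_mul (ne_of_gt (Real.rpow_pos_of_pos hbx _)) (ne_of_gt hcoef),
      Real.log_rpow hbx]
  have hlogθ : Real.log (thetaF p c α) = max 0 (α * Real.log ((1+x)/2) + g α) := by
    rw [thetaF, ← hlogψ]
    rcases le_total ((((1+x)/2)^α) * ((2-p+p*Real.exp (c*α))/2)) 1 with h | h
    · rw [max_eq_left h, Real.log_one, max_eq_left (Real.log_nonpos hψ.le h)]
    · rw [max_eq_right h, max_eq_right (Real.log_nonneg h)]
  show max 0 (Real.log ((1+x)/2) + g α / α) = Real.log (thetaF p c α) / α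
  rw [hlogθ, ← max_div_div_right hα.le, zero_div]
  congr 1
  field_simp

end Aux2

/-- Inequalities (4.5.2)-(4.5.3): for `0 < p ≤ 1`, nonempty `A ⊆ C_n` and
`ρ = p/2 - Δ(A,p)/n`, if `0 < ρ ≤ 1/4` and
`p ≥ (ln 2 + ln(1-2ρ))/(ln(1-2ρ) - ln(2ρ))`, then
`(ln |A|)/n ≤ 2ρ·ln(1/(2ρ)) + (1-2ρ)·ln(1/(1-2ρ))`. -/
theorem stmt8 (p : ℝ) (hp0 : 0 < p) (hp1 : p ≤ 1) {n : ℕ} (hn : 1 ≤ n)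
    (A : Set (Fin n → Bool)) (hA : A.Nonempty)
    (ρ : ℝ) (hρ : ρ = p / 2 - avgDistP p A / n)
    (hρ0 : 0 < ρ) (hρ4 : ρ ≤ 1 / 4)
    (hp : (Real.log 2 + Real.log (1 - 2 * ρ)) / (Real.log (1 - 2 * ρ) - Real.log (2 * ρ)) ≤ p) :
    Real.log (Nat.card A) / n ≤
      2 * ρ * Real.log (1 / (2 * ρ)) + (1 - 2 * ρ) * Real.log (1 / (1 - 2 * ρ)) := by
  classical
  have hn0 : (0:ℝ) < n := by exact_mod_cast lt_of_lt_of_le one_pos hn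
  set s := 2 * ρ with hsdef
  have hs0 : 0 < s := by rw [hsdef]; linarith
  have hs12 : s ≤ 1/2 := by rw [hsdef]; linarith
  have h1s : (0:ℝ) < 1 - s := by linarith
  have hav : avgDistP p A = ∑ l : Fin n → Bool, ∑ x : Fin n → Bool,
      (bernWeight p l / 2^n) * (dlToSet l x A : ℝ) := by
    unfold avgDistP
    simp [Fintype.card_fin]
  set Δ := avgDistP p A with hΔdef
  have hΔ0 : 0 ≤ Δ := by
    rw [hav]
    apply Finset.sum_nonneg fun l _ => Finset.sum_nonneg fun x _ => ?_
    have := bernWeight_nonneg hp0.le hp1 l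
    positivity
  have hρs : ρ = s/2 := by rw [hsdef]; ring
  have hΔval : Δ = (n:ℝ)*(p-s)/2 := by
    have h3 : Δ/(n:ℝ) = p/2 - ρ := by linarith [hρ]
    have h4 := (div_eq_iff (ne_of_gt hn0)).1 h3
    rw [h4, hρs]; ring
  have hsp : s ≤ p := by nlinarith [hΔ0, hΔval]
  set L := Real.log (1-s) - Real.log s with hLdef
  have hL0 : 0 ≤ L := by
    rw [hLdef]
    have := Real.log_le_log hs0 (by linarith : s ≤ 1-s)
    linarith
  have php : Real.log 2 + Real.log (1-s) ≤ p*L := by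
    rcases lt_or_eq_of_le hL0 with hL | hL
    · exact (div_le_iff₀ hL).1 hp
    · have hs_half : s = 1/2 := by
        have h5 : Real.log s = Real.log (1-s) := by rw [hLdef] at hL; linarith
        have h6 : s = 1-s := by
          have h8 := congrArg Real.exp h5
          rwa [Real.exp_log hs0, Real.exp_log h1s] at h8
        linarith
      have h7 : Real.log (1-s) = -Real.log 2 := by
        rw [hs_half, show (1:ℝ) - 1/2 = 2⁻¹ by norm_num, Real.log_inv]
      rw [h7, ← hL]
      norm_num
  set c := 2*L with hcdef
  have hc0 : 0 ≤ c := by rw [hcdef]; linarith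
  have hcard_pos : 0 < A.ncard := (Set.ncard_pos (Set.toFinite _)).2 hA
  have hA1 : (1:ℝ) ≤ (A.ncard : ℝ) := by exact_mod_cast hcard_pos
  -- key per-alpha bound
  have key : ∀ α : ℝ, α ∈ Set.Ioi (0:ℝ) →
      Real.log (A.ncard) ≤ (n:ℝ)*Real.log 2 + (n:ℝ)*(Real.log (thetaF p c α)/α) - c*Δ := by
    intro α hα
    have hα : (0:ℝ) < α := hα
    set T := Real.exp (c*α) with hTdef
    have hT1 : 1 ≤ T := Real.one_le_exp (by positivity)
    have hθ1 : 1 ≤ thetaF p c α := le_max_left _ _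
    have hmaster := master p T α (thetaF p c α) hp0 hp1 hT1 hα hθ1
      (H1_holds p c α hp0 hp1 hα hc0) (H2_holds p c α hp0 hp1 hα hc0) n A hA
    have hjen := jensen_step p T hp0.le hp1 (lt_of_lt_of_le one_pos hT1) A
    rw [← hav] at hjen
    have hpre : (0:ℝ) < ((A.ncard:ℝ)/2^n)^α := Real.rpow_pos_of_pos (by positivity) _
    have hcomb : ((A.ncard:ℝ)/2^n)^α * Real.exp (Real.log T * Δ) ≤ (thetaF p c α)^n :=
      le_trans (mul_le_mul_of_nonneg_left hjen hpre.le) hmaster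
    have hlog := Real.log_le_log (by positivity) hcomb
    rw [Real.log_mul (ne_of_gt hpre) (ne_of_gt (Real.exp_pos _)), Real.log_exp,
      Real.log_rpow (by positivity), Real.log_pow, Real.log_div (by positivity) (by positivity),
      Real.log_pow] at hlog
    have hlogT : Real.log T = c*α := by rw [hTdef, Real.log_exp]
    rw [hlogT] at hlog
    -- hlog : α * (log ncard - n*log 2) + c*α*Δ ≤ n * log θ
    have hfin : Real.log (A.ncard) - (n:ℝ)*Real.log 2 + c*Δ ≤ (n:ℝ)*Real.log (thetaF p c α)/α := by
      rw [le_div_iff₀ hα]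
      nlinarith [hlog]
    have hmd : (n:ℝ)*(Real.log (thetaF p c α)/α) = (n:ℝ)*Real.log (thetaF p c α)/α :=
      (mul_div_assoc _ _ _).symm
    rw [hmd]
    linarith [hfin]
  set M := max 0 (Real.log ((1+Real.exp (-c))/2) + c*p/2) with hMdef
  have hlim : Tendsto (fun α => (n:ℝ)*Real.log 2 + (n:ℝ)*(Real.log (thetaF p c α)/α) - c*Δ)
      (nhdsWithin 0 (Set.Ioi 0)) (nhds ((n:ℝ)*Real.log 2 + (n:ℝ)*M - c*Δ)) := by
    have h := theta_limit p c hp0 hp1 hc0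
    exact ((h.const_mul (n:ℝ)).const_add _).sub_const _
  have hge : Real.log (A.ncard) ≤ (n:ℝ)*Real.log 2 + (n:ℝ)*M - c*Δ :=
    ge_of_tendsto hlim (eventually_mem_nhdsWithin.mono key)
  -- branch algebra
  have hident : L*s - Real.log (1-s) = s*Real.log (1/s) + (1-s)*Real.log (1/(1-s)) := by
    rw [one_div, one_div, Real.log_inv, Real.log_inv, hLdef]
    ring
  have hH : (n:ℝ)*Real.log 2 + (n:ℝ)*M - c*Δ
      ≤ (n:ℝ)*(s*Real.log (1/s) + (1-s)*Real.log (1/(1-s))) := by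
    rw [hΔval, hMdef]
    rcases le_total (Real.log ((1+Real.exp (-c))/2) + c*p/2) 0 with hMb | hMb
    · rw [max_eq_left hMb]
      have core : Real.log 2 - L*(p-s) ≤ s*Real.log (1/s) + (1-s)*Real.log (1/(1-s)) := by
        rw [← hident]
        have e1 : Real.log 2 - L*(p-s)
            = (Real.log 2 + Real.log (1-s) - p*L) + (L*s - Real.log (1-s)) := by ring
        rw [e1]
        linarith [php]
      have e2 : (n:ℝ)*Real.log 2 + (n:ℝ)*0 - 2*L*((n:ℝ)*(p-s)/2)
          = (n:ℝ)*(Real.log 2 - L*(p-s)) := by ring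
      rw [hcdef, e2]
      exact mul_le_mul_of_nonneg_left core hn0.le
    · rw [max_eq_right hMb]
      have hxval : Real.exp (-c) = (s/(1-s))^2 := by
        have e3 : -c = ((2:ℕ):ℝ)*(Real.log s - Real.log (1-s)) := by
          rw [hcdef, hLdef]; push_cast; ring
        rw [e3, Real.exp_nat_mul, Real.exp_sub, Real.exp_log hs0, Real.exp_log h1s]
      have hxb : 1 + Real.exp (-c) ≤ (1-s)⁻¹ := by
        rw [hxval, div_pow, inv_eq_one_div, le_div_iff₀ h1s]
        have e4 : (1 + s^2/(1-s)^2) * (1-s) = ((1-s)^2 + s^2)/(1-s) := by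
          field_simp
        rw [e4, div_le_one h1s]
        nlinarith [hs0, hs12]
      have hxpos : (0:ℝ) < 1 + Real.exp (-c) := by positivity
      have hlogxb : Real.log ((1+Real.exp (-c))/2) ≤ -Real.log (1-s) - Real.log 2 := by
        rw [Real.log_div (ne_of_gt hxpos) (by norm_num)]
        have := Real.log_le_log hxpos hxb
        rw [Real.log_inv] at this
        linarith
      have core : Real.log 2 + (Real.log ((1+Real.exp (-c))/2) + c*p/2) - c*(p-s)/2
          ≤ s*Real.log (1/s) + (1-s)*Real.log (1/(1-s)) := by
        rw [← hident]
        have e5 : Real.log 2 + (Real.log ((1+Real.exp (-c))/2) + c*p/2) - c*(p-s)/2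
            = Real.log ((1+Real.exp (-c))/2) + Real.log 2 + c*s/2 := by ring
        rw [e5, hcdef]
        have e6 : 2*L*s/2 = L*s := by ring
        linarith [hlogxb]
      calc (n:ℝ)*Real.log 2 + (n:ℝ)*(Real.log ((1+Real.exp (-c))/2) + c*p/2) - c*((n:ℝ)*(p-s)/2)
          = (n:ℝ)*(Real.log 2 + (Real.log ((1+Real.exp (-c))/2) + c*p/2) - c*(p-s)/2) := by ring
        _ ≤ (n:ℝ)*(s*Real.log (1/s) + (1-s)*Real.log (1/(1-s))) :=
            mul_le_mul_of_nonneg_left core hn0.le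
  have hfinal : Real.log (A.ncard) ≤ (n:ℝ)*(s*Real.log (1/s) + (1-s)*Real.log (1/(1-s))) :=
    le_trans hge hH
  rw [Nat.card_coe_set_eq, div_le_iff₀ hn0]
  calc Real.log (A.ncard) ≤ (n:ℝ)*(s*Real.log (1/s) + (1-s)*Real.log (1/(1-s))) := hfinal
    _ = (s*Real.log (1/s) + (1-s)*Real.log (1/(1-s))) * n := mul_comm _ _
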